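/- Let k be a non-square positive integer and d a positive rational. If some iterate f^n(∞) of f(x) = (dx+k)/(x+d) is a Pellian convergent (i.e., equal to p/q with p² − kq² = ±1), then infinitely many iterates f^{in}(∞), i ≥ 1, are Pellian convergents. -/

import Mathlib

/-- The linear fractional transformation `f(x) = (dx + k)/(x + d)` acting on
the projective line `ℚℙ¹ = OnePoint ℚ`, with `f(∞) = d`. -/
noncomputable def lft (d k : ℚ) : OnePoint ℚ → OnePoint ℚ := fun x =>
  match x with
  | none => (d : OnePoint ℚ)
  | some x => if x + d = 0 then OnePoint.infty else ((d * x + k) / (x + d) : ℚ)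

/-- The point `a/b` of the projective line, with `a/0 = ∞`. -/
noncomputable def ratio (a b : ℚ) : OnePoint ℚ :=
  if b = 0 then OnePoint.infty else ((a / b : ℚ) : OnePoint ℚ)

namespace Stmt4Aux

/-- `(A d k m).1 + (A d k m).2 * √k = (d + √k)^m`. -/
def A (d k : ℚ) : ℕ → ℚ × ℚ
  | 0 => (1, 0)
  | m+1 => ((A d k m).1 * d + k * (A d k m).2, (A d k m).1 + d * (A d k m).2)

lemma A_pos (d k : ℚ) (hd : 0 < d) (hk : 0 < k) :
    ∀ m, 0 < (A d k m).1 ∧ 0 ≤ (A d k m).2 ∧ (1 ≤ m → 0 < (A d k m).2)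
  | 0 => by simp [A]
  | m+1 => by
    obtain ⟨h1, h2, _⟩ := A_pos d k hd hk m
    refine ⟨by simp only [A]; positivity, by simp only [A]; positivity,
      fun _ => by simp only [A]; positivity⟩

lemma lft_infty (d k : ℚ) : lft d k OnePoint.infty = (d : OnePoint ℚ) := rfl

lemma lft_coe (d k x : ℚ) : lft d k (x : OnePoint ℚ) =
    if x + d = 0 then OnePoint.infty else ((d * x + k) / (x + d) : ℚ) := rfl

lemma lft_iter (d k : ℚ) (hd : 0 < d) (hk : 0 < k) (m : ℕ) :
    (lft d k)^[m] OnePoint.infty = ratio (A d k m).1 (A d k m).2 := by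
  induction m with
  | zero => simp [A, ratio]
  | succ m ih =>
    rw [Function.iterate_succ_apply', ih]
    obtain ⟨h1, h2, _⟩ := A_pos d k hd hk m
    set a := (A d k m).1 with ha
    set b := (A d k m).2 with hb
    rcases eq_or_lt_of_le h2 with hb0 | hb0
    · rw [ratio, if_pos hb0.symm, lft_infty]
      have : (A d k (m+1)).1 = a * d ∧ (A d k (m+1)).2 = a := by
        simp [A, ← ha, ← hb, ← hb0]
      rw [ratio, this.1, this.2, if_neg h1.ne']
      rw [mul_comm, mul_div_assoc, div_self h1.ne', mul_one]
    · rw [ratio, if_neg hb0.ne', lft_coe]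
      have hx : a / b + d ≠ 0 := by positivity
      rw [if_neg hx]
      have h1' : (A d k (m+1)).1 = a * d + k * b := by simp [A, ← ha, ← hb]
      have h2' : (A d k (m+1)).2 = a + d * b := by simp [A, ← ha, ← hb]
      have hden : (0:ℚ) < a + d * b := by positivity
      rw [ratio, h1', h2', if_neg hden.ne']
      congr 1
      rw [div_eq_div_iff hx hden.ne']
      field_simp

lemma A_add (d k : ℚ) (m s : ℕ) :
    (A d k (m + s)).1 = (A d k m).1 * (A d k s).1 + k * (A d k m).2 * (A d k s).2 ∧
    (A d k (m + s)).2 = (A d k m).1 * (A d k s).2 + (A d k m).2 * (A d k s).1 := by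
  induction s with
  | zero => simp [A]
  | succ s ih =>
    have : m + (s + 1) = (m + s) + 1 := by omega
    rw [this]
    simp only [A]
    rw [ih.1, ih.2]
    constructor <;> ring

/-- `(B k p q i).1 + (B k p q i).2 * √k = (p + q√k)^i`. -/
def B (k p q : ℤ) : ℕ → ℤ × ℤ
  | 0 => (1, 0)
  | i+1 => ((B k p q i).1 * p + k * (B k p q i).2 * q,
            (B k p q i).1 * q + (B k p q i).2 * p)

lemma B_pell (k p q : ℤ) :
    ∀ i, (B k p q i).1 ^ 2 - k * (B k p q i).2 ^ 2 = (p ^ 2 - k * q ^ 2) ^ i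
  | 0 => by simp [B]
  | i+1 => by
    have h := B_pell k p q i
    simp only [B]
    conv_rhs => rw [pow_succ]
    rw [← h]
    ring

lemma B_pos (k p q : ℤ) (hk : 0 < k) (hp : 0 < p) (hq : 0 < q) :
    ∀ i, 0 < (B k p q i).1 ∧ 0 ≤ (B k p q i).2 ∧ (1 ≤ i → 0 < (B k p q i).2)
  | 0 => by simp [B]
  | i+1 => by
    obtain ⟨h1, h2, _⟩ := B_pos k p q hk hp hq i
    refine ⟨by simp only [B]; positivity, by simp only [B]; positivity,
      fun _ => by simp only [B]; positivity⟩

end Stmt4Aux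

open Stmt4Aux in
/-- If some iterate `f^n(∞)` of `f(x) = (dx+k)/(x+d)` is a Pellian convergent
(equal to `p/q` with `p² − kq² = ±1`), then all the iterates `f^{in}(∞)`, `i ≥ 1`,
are Pellian convergents (so infinitely many iterates are Pellian). -/
theorem stmt4 (k : ℕ) (hk : 0 < k) (hknsq : ¬ IsSquare k) (d : ℚ) (hd : 0 < d)
    (n : ℕ) (p q : ℤ) (hp : 0 < p) (hq : 0 < q)
    (hpell : p ^ 2 - (k : ℤ) * q ^ 2 = 1 ∨ p ^ 2 - (k : ℤ) * q ^ 2 = -1)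
    (hit : (lft d (k : ℚ))^[n] OnePoint.infty = ratio (p : ℚ) (q : ℚ)) :
    ∀ i : ℕ, 1 ≤ i → ∃ P Q : ℤ, 0 < P ∧ 0 < Q ∧
      (P ^ 2 - (k : ℤ) * Q ^ 2 = 1 ∨ P ^ 2 - (k : ℤ) * Q ^ 2 = -1) ∧
      (lft d (k : ℚ))^[i * n] OnePoint.infty = ratio (P : ℚ) (Q : ℚ) := by
  intro i hi
  have hk' : (0:ℚ) < (k:ℚ) := by exact_mod_cast hk
  have hq0 : ((q:ℚ)) ≠ 0 := by positivity
  have hp0 : ((p:ℚ)) ≠ 0 := by positivity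
  -- n ≥ 1
  have hn : 1 ≤ n := by
    by_contra h
    have hn0 : n = 0 := by omega
    subst hn0
    rw [Function.iterate_zero_apply, ratio, if_neg hq0] at hit
    exact OnePoint.infty_ne_coe _ hit
  obtain ⟨han, _, hbn⟩ := A_pos d (k:ℚ) hd hk' n
  have hbn' := hbn hn
  rw [lft_iter d (k:ℚ) hd hk' n, ratio, ratio, if_neg hbn'.ne', if_neg hq0,
    OnePoint.coe_eq_coe] at hit
  set r : ℚ := (A d (k:ℚ) n).2 / q with hr
  have hrpos : 0 < r := by positivity
  have hbneq : (A d (k:ℚ) n).2 = r * q := by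
    rw [hr]; field_simp
  have haneq : (A d (k:ℚ) n).1 = r * p := by
    rw [div_eq_div_iff hbn'.ne' hq0] at hit
    rw [hr]
    field_simp
    linarith [hit]
  have key : ∀ j, (A d (k:ℚ) (j * n)).1 = r ^ j * ((B (k:ℤ) p q j).1 : ℚ) ∧
      (A d (k:ℚ) (j * n)).2 = r ^ j * ((B (k:ℤ) p q j).2 : ℚ) := by
    intro j
    induction j with
    | zero => simp [A, B]
    | succ j ih =>
      have hadd := A_add d (k:ℚ) (j * n) n
      have hmul : (j + 1) * n = j * n + n := by ring
      rw [hmul]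
      constructor
      · rw [hadd.1, ih.1, ih.2, haneq, hbneq]
        simp only [B]
        push_cast
        ring
      · rw [hadd.2, ih.1, ih.2, haneq, hbneq]
        simp only [B]
        push_cast
        ring
  obtain ⟨hP, _, hQ⟩ := B_pos (k:ℤ) p q (by exact_mod_cast hk) hp hq i
  have hQ' := hQ hi
  refine ⟨(B (k:ℤ) p q i).1, (B (k:ℤ) p q i).2, hP, hQ', ?_, ?_⟩
  · have hB := B_pell (k:ℤ) p q i
    rcases hpell with h | h
    · left; rw [hB, h, one_pow]
    · rw [hB, h]
      rcases Nat.even_or_odd i with he | ho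
      · left; exact he.neg_one_pow
      · right; exact ho.neg_one_pow
  · rw [lft_iter d (k:ℚ) hd hk' (i * n), (key i).1, (key i).2]
    have hQq : ((B (k:ℤ) p q i).2 : ℚ) ≠ 0 := by exact_mod_cast hQ'.ne'
    have hden : r ^ i * ((B (k:ℤ) p q i).2 : ℚ) ≠ 0 := by positivity
    rw [ratio, ratio, if_neg hden, if_neg hQq]
    congr 1
    rw [mul_div_mul_left _ _ (by positivity : r ^ i ≠ 0)]
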